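/- Let G be a connected locally finite graph with at least two ends and infinite motion. If c is a random 2-colouring of G, then the stabiliser (Aut G)_c is almost surely compact in the permutation topology; equivalently, almost surely some vertex has finite orbit under (Aut G)_c. -/

import Mathlib

open MeasureTheory

namespace TwoEndedRandomAux

open SimpleGraph

variable {V : Type*} {G : SimpleGraph V}

/-- Graph isomorphisms preserve distance (in a connected graph). -/
private lemma iso_dist (hconn : G.Connected) (φ : G ≃g G) (a b : V) :
    G.dist (φ a) (φ b) = G.dist a b := by
  have key : ∀ (ψ : G ≃g G) (a b : V), G.dist (ψ a) (ψ b) ≤ G.dist a b := by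
    intro ψ a b
    obtain ⟨p, hp⟩ := hconn.exists_walk_length_eq_dist a b
    calc G.dist (ψ a) (ψ b) ≤ (p.map ψ.toHom).length := SimpleGraph.dist_le _
      _ = p.length := by rw [SimpleGraph.Walk.length_map]
      _ = G.dist a b := hp
  refine le_antisymm (key φ a b) ?_
  have h := key φ.symm (φ a) (φ b)
  simpa using h

/-- Balls are finite in a connected locally finite graph. -/
private lemma ball_fin (hconn : G.Connected) (hlf : ∀ v : V, Set.Finite (G.neighborSet v))
    (v : V) : ∀ n : ℕ, {u : V | G.dist v u ≤ n}.Finite := by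
  intro n
  induction n with
  | zero =>
    refine Set.Finite.subset (Set.finite_singleton v) ?_
    intro u hu
    simp only [Set.mem_setOf_eq, Nat.le_zero] at hu
    simp [((hconn.dist_eq_zero_iff).mp hu).symm]
  | succ n ih =>
    refine Set.Finite.subset (ih.union (Set.Finite.biUnion ih (fun w _ => hlf w))) ?_
    intro u hu
    simp only [Set.mem_setOf_eq] at hu
    by_cases h : G.dist v u ≤ n
    · exact Or.inl h
    · have hd : G.dist v u = n + 1 := le_antisymm hu (by omega)
      have hne : u ≠ v := by
        intro h'
        rw [h'] at hd
        simp [SimpleGraph.dist_self] at hd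
      obtain ⟨p, hp⟩ := hconn.exists_walk_length_eq_dist v u
      obtain ⟨w, hadj, q, heq⟩ := SimpleGraph.Walk.exists_eq_cons_of_ne hne p.reverse
      have hlen : q.length = n := by
        have h1 : p.reverse.length = p.length := SimpleGraph.Walk.length_reverse p
        rw [heq, SimpleGraph.Walk.length_cons, hp, hd] at h1
        omega
      have hw : G.dist v w ≤ n := by
        rw [SimpleGraph.dist_comm]
        calc G.dist w v ≤ q.length := SimpleGraph.dist_le q
          _ = n := hlen
      exact Or.inr (Set.mem_biUnion (show w ∈ {w : V | G.dist v w ≤ n} from hw)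
        (show u ∈ G.neighborSet w from hadj.symm))

/-- A connected locally finite graph has countably many vertices. -/
private lemma countable_of_connected_locallyFinite (hconn : G.Connected)
    (hlf : ∀ v : V, Set.Finite (G.neighborSet v)) : Countable V := by
  obtain ⟨v₀⟩ := hconn.nonempty
  have huniv : (Set.univ : Set V) ⊆ ⋃ n : ℕ, {u : V | G.dist v₀ u ≤ n} := by
    intro u _
    simp only [Set.mem_iUnion, Set.mem_setOf_eq]
    exact ⟨G.dist v₀ u, le_rfl⟩
  have hcount : (Set.univ : Set V).Countable :=
    Set.Countable.mono huniv
      (Set.countable_iUnion (fun n => (ball_fin hconn hlf v₀ n).countable))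
  exact Set.countable_univ_iff.mp hcount

/-- A walk between vertices in different components of the complement of `K` passes
through `K`. -/
private lemma walk_hits {K : Set V} : ∀ {x u : V} (p : G.Walk x u) (hx : x ∉ K) (hu : u ∉ K),
    G.componentComplMk hx ≠ G.componentComplMk hu → ∃ k ∈ K, k ∈ p.support := by
  intro x u p
  induction p with
  | nil =>
    intro hx hu hne
    exact (hne rfl).elim
  | @cons a b u' hadj q IH =>
    intro hx hu hne
    by_cases hb : b ∈ K
    · exact ⟨b, hb, by simp [SimpleGraph.Walk.support_cons]⟩
    · have h1 : G.componentComplMk hx = G.componentComplMk hb :=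
        SimpleGraph.componentComplMk_eq_of_adj G hx hb hadj
      obtain ⟨k, hk, hks⟩ := IH hb hu (fun h => hne (h1.trans h))
      exact ⟨k, hk, by simp [SimpleGraph.Walk.support_cons, hks]⟩

/-- The components chosen by an end are infinite (universe-polymorphic version of
`SimpleGraph.end_componentCompl_infinite`). -/
private lemma end_component_infinite (e : G.end) (Kop : (Finset V)ᵒᵖ) :
    (e.val Kop).supp.Infinite := by
  refine (e.val Kop).infinite_iff_in_all_ranges.mpr (fun L h => ?_)
  change Opposite.unop Kop ⊆ Opposite.unop (Opposite.op L) at h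
  exact ⟨e.val (Opposite.op L), (e.prop (CategoryTheory.opHomOfLE h))⟩

/-- The key probabilistic lemma: for a fixed target `x` which is "shielded" from an
infinite set `U` (in the sense that every `u ∈ U` is at least two steps closer to `v₀`
than to `x`), the event that some colour-preserving automorphism sends `v₀` to `x`
is null. -/
private lemma measure_image_event_zero (hconn : G.Connected)
    (hlf : ∀ v : V, Set.Finite (G.neighborSet v))
    (μ : Measure (V → Bool))
    (hμ : ∀ (F : Finset V) (f : V → Bool),
      μ {c : V → Bool | ∀ v ∈ F, c v = f v} = (2 : ENNReal)⁻¹ ^ F.card)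
    (v₀ x : V) (U : Set V) (hUinf : U.Infinite)
    (key : ∀ u ∈ U, G.dist v₀ u + 2 ≤ G.dist x u) :
    μ {c : V → Bool | ∃ φ : G ≃g G, (∀ u, c (φ u) = c u) ∧ φ v₀ = x} = 0 := by
  classical
  have hsph : ∀ (y : V) (n : ℕ), {u : V | G.dist y u = n}.Finite := by
    intro y n
    refine Set.Finite.subset (ball_fin hconn hlf y n) ?_
    intro u hu
    simp only [Set.mem_setOf_eq] at hu ⊢
    omega
  set Ev := {c : V → Bool | ∃ φ : G ≃g G, (∀ u, c (φ u) = c u) ∧ φ v₀ = x} with hEv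
  suffices H : ∀ m : ℕ, μ Ev ≤ (2 : ENNReal)⁻¹ ^ m by
    by_contra hne
    obtain ⟨m, hm⟩ := ENNReal.exists_inv_two_pow_lt hne
    exact (H m).not_gt hm
  intro m
  -- the set of levels hit by U is infinite
  have himg : ((fun u => G.dist v₀ u) '' U).Infinite := by
    intro hfin
    apply hUinf
    have hsub : U ⊆ ⋃ n ∈ ((fun u => G.dist v₀ u) '' U), {u : V | G.dist v₀ u = n} :=
      fun u hu => Set.mem_biUnion (Set.mem_image_of_mem _ hu) rfl
    exact (hfin.biUnion (fun n _ => hsph v₀ n)).subset hsub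
  -- choose m levels
  obtain ⟨tset, htsub, htfin, htcard⟩ := himg.exists_subset_ncard_eq m
  set L : Finset ℕ := htfin.toFinset with hLdef
  have hLcard : L.card = m := by
    rw [hLdef, ← Set.ncard_eq_toFinset_card _ htfin]
    exact htcard
  have hLmem : ∀ n ∈ L, ∃ u ∈ U, G.dist v₀ u = n := by
    intro n hn
    have : n ∈ tset := htfin.mem_toFinset.mp hn
    obtain ⟨u, hu, hdu⟩ := htsub this
    exact ⟨u, hu, hdu⟩
  -- choose a "star" vertex in U on each chosen sphere of v₀
  obtain ⟨star, hstar⟩ : ∃ star : ℕ → V, ∀ n ∈ L, star n ∈ U ∧ G.dist v₀ (star n) = n := by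
    choose f h1 h2 using hLmem
    exact ⟨fun n => if h : n ∈ L then f n h else v₀,
      fun n hn => by simp only [dif_pos hn]; exact ⟨h1 n hn, h2 n hn⟩⟩
  set T : Finset V := L.biUnion
    (fun n => (hsph v₀ n).toFinset ∪ (hsph x n).toFinset) with hTdef
  have hSvT : ∀ n ∈ L, (hsph v₀ n).toFinset ⊆ T := by
    intro n hn u hu
    exact Finset.mem_biUnion.mpr ⟨n, hn, Finset.mem_union_left _ hu⟩
  have hSxT : ∀ n ∈ L, (hsph x n).toFinset ⊆ T := by
    intro n hn u hu
    exact Finset.mem_biUnion.mpr ⟨n, hn, Finset.mem_union_right _ hu⟩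
  have hstarSv : ∀ n (hn : n ∈ L), star n ∈ (hsph v₀ n).toFinset := by
    intro n hn
    exact (Set.Finite.mem_toFinset _).mpr ((hstar n hn).2)
  have hstarT : ∀ n ∈ L, star n ∈ T := fun n hn => hSvT n hn (hstarSv n hn)
  -- a coarser event: colour counts match on all chosen spheres
  set P : (V → Bool) → Prop := fun c => ∀ n ∈ L,
      ((hsph v₀ n).toFinset.filter (fun u => c u = true)).card =
      ((hsph x n).toFinset.filter (fun u => c u = true)).card with hPdef
  have hEvP : Ev ⊆ {c | P c} := by
    rintro c ⟨φ, hpres, hphi⟩ n hn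
    have hsymm : ∀ b, φ (φ.symm b) = b := fun b => φ.apply_symm_apply b
    refine Finset.card_bij' (fun a _ => φ a) (fun b _ => φ.symm b) ?_ ?_ ?_ ?_
    · intro a ha
      obtain ⟨haS, hac⟩ := Finset.mem_filter.mp ha
      have hda : G.dist v₀ a = n := by simpa using (Set.Finite.mem_toFinset _).mp haS
      refine Finset.mem_filter.mpr ⟨(Set.Finite.mem_toFinset _).mpr ?_, ?_⟩
      · show G.dist x (φ a) = n
        rw [← hphi, iso_dist hconn φ v₀ a, hda]
      · rw [hpres a]; exact hac
    · intro b hb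
      obtain ⟨hbS, hbc⟩ := Finset.mem_filter.mp hb
      have hdb : G.dist x b = n := by simpa using (Set.Finite.mem_toFinset _).mp hbS
      have hv₀ : φ.symm x = v₀ := by rw [← hphi]; exact φ.symm_apply_apply v₀
      refine Finset.mem_filter.mpr ⟨(Set.Finite.mem_toFinset _).mpr ?_, ?_⟩
      · show G.dist v₀ (φ.symm b) = n
        rw [← hv₀, iso_dist hconn φ.symm x b, hdb]
      · have := hpres (φ.symm b)
        rw [hsymm b] at this
        rw [← this]; exact hbc
    · intro a _; exact φ.symm_apply_apply a
    · intro b _; exact hsymm b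
  -- cylinder decomposition
  set ext : (↥T → Bool) → V → Bool :=
    fun g v => if h : v ∈ T then g ⟨v, h⟩ else false with hextdef
  have hext : ∀ g (v : V) (h : v ∈ T), ext g v = g ⟨v, h⟩ := fun g v h => dif_pos h
  set Sat : Finset (↥T → Bool) :=
    Finset.univ.filter (fun g => P (ext g)) with hSatdef
  have hcov : {c | P c} ⊆ ⋃ g ∈ Sat, {c : V → Bool | ∀ v ∈ T, c v = ext g v} := by
    intro c hc
    have hc' : P c := hc
    refine Set.mem_iUnion₂.mpr ⟨(fun v : ↥T => c v.1), ?_, ?_⟩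
    case _ =>
      refine Finset.mem_filter.mpr ⟨Finset.mem_univ _, ?_⟩
      intro n hn
      have hv : ((hsph v₀ n).toFinset.filter (fun u => ext (fun v => c v.1) u = true)) =
          ((hsph v₀ n).toFinset.filter (fun u => c u = true)) := by
        apply Finset.filter_congr
        intro u hu
        exact iff_of_eq (congrArg (fun b => b = true) (hext (fun v : ↥T => c v.1) u (hSvT n hn hu)))
      have hx' : ((hsph x n).toFinset.filter (fun u => ext (fun v => c v.1) u = true)) =
          ((hsph x n).toFinset.filter (fun u => c u = true)) := by
        apply Finset.filter_congr
        intro u hu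
        exact iff_of_eq (congrArg (fun b => b = true) (hext (fun v : ↥T => c v.1) u (hSxT n hn hu)))
      rw [hv, hx']
      exact hc' n hn
    case _ =>
      intro v hv
      exact (hext (fun v : ↥T => c v.1) v hv).symm
  -- the star vertices inside T
  set S : Finset (↥T) :=
    L.attach.image (fun n => (⟨star n.1, hstarT n.1 n.2⟩ : ↥T)) with hSdef
  have hmemS : ∀ a : ↥T, a ∈ S →
      ∃ n, ∃ (hn : n ∈ L), a = ⟨star n, hstarT n hn⟩ := by
    intro a ha
    obtain ⟨n, hn, heq⟩ := Finset.mem_image.mp ha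
    exact ⟨n.1, n.2, heq.symm⟩
  have hstar_inj : ∀ n ∈ L, ∀ k ∈ L, star n = star k → n = k := by
    intro n hn k hk h
    have h1 := (hstar n hn).2
    have h2 := (hstar k hk).2
    rw [h] at h1
    omega
  have hScard : S.card = m := by
    rw [hSdef, Finset.card_image_of_injOn, Finset.card_attach, hLcard]
    intro a ha b hb heq
    have : star a.1 = star b.1 := congrArg Subtype.val heq
    exact Subtype.ext (hstar_inj a.1 a.2 b.1 b.2 this)
  have hmle : m ≤ T.card := by
    rw [← hScard]
    calc S.card ≤ (Finset.univ : Finset (↥T)).card := Finset.card_le_univ S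
      _ = Fintype.card (↥T) := Finset.card_univ
      _ = T.card := Fintype.card_coe T
  -- uniqueness: members of Sat are determined by their values off the stars
  have huniq : ∀ g ∈ Sat, ∀ g' ∈ Sat,
      (∀ a : ↥T, a ∉ S → g a = g' a) → g = g' := by
    intro g hg g' hg' hagree
    have hPg : P (ext g) := (Finset.mem_filter.mp hg).2
    have hPg' : P (ext g') := (Finset.mem_filter.mp hg').2
    have main : ∀ n, n ∈ L → ∀ (h : star n ∈ T), g ⟨star n, h⟩ = g' ⟨star n, h⟩ := by
      intro n
      induction n using Nat.strong_induction_on with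
      | _ n IH =>
        intro hn h
        -- values agree on the x-sphere at level n
        have hxag : ∀ u ∈ (hsph x n).toFinset, ext g u = ext g' u := by
          intro u hu
          have huT : u ∈ T := hSxT n hn hu
          rw [hext g u huT, hext g' u huT]
          by_cases hus : (⟨u, huT⟩ : ↥T) ∈ S
          · obtain ⟨k, hkL, heq⟩ := hmemS _ hus
            have hu_eq : u = star k := congrArg Subtype.val heq
            have hdxu : G.dist x u = n := by simpa using (Set.Finite.mem_toFinset _).mp hu
            have hk2 : k + 2 ≤ n := by
              have hkey := key (star k) (hstar k hkL).1
              rw [(hstar k hkL).2, ← hu_eq, hdxu] at hkey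
              exact hkey
            have hkn : k < n := by omega
            calc g ⟨u, huT⟩ = g ⟨star k, hstarT k hkL⟩ := congrArg g heq
              _ = g' ⟨star k, hstarT k hkL⟩ := IH k hkn hkL (hstarT k hkL)
              _ = g' ⟨u, huT⟩ := (congrArg g' heq).symm
          · exact hagree _ hus
        have hcx : ((hsph x n).toFinset.filter (fun u => ext g u = true)).card =
            ((hsph x n).toFinset.filter (fun u => ext g' u = true)).card := by
          congr 1
          apply Finset.filter_congr
          intro u hu
          exact iff_of_eq (congrArg (fun b => b = true) (hxag u hu))
        -- values agree on the v₀-sphere at level n minus the star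
        have hvag : ∀ u ∈ ((hsph v₀ n).toFinset).erase (star n), ext g u = ext g' u := by
          intro u hu
          obtain ⟨hune, huSv⟩ := Finset.mem_erase.mp hu
          have huT : u ∈ T := hSvT n hn huSv
          rw [hext g u huT, hext g' u huT]
          by_cases hus : (⟨u, huT⟩ : ↥T) ∈ S
          · obtain ⟨k, hkL, heq⟩ := hmemS _ hus
            have hu_eq : u = star k := congrArg Subtype.val heq
            have hdvu : G.dist v₀ u = n := by simpa using (Set.Finite.mem_toFinset _).mp huSv
            have hkn : k = n := by
              rw [hu_eq, (hstar k hkL).2] at hdvu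
              exact hdvu
            exact absurd (by rw [hu_eq, hkn]) hune
          · exact hagree _ hus
        have hce : (((hsph v₀ n).toFinset).erase (star n) |>.filter
              (fun u => ext g u = true)).card =
            (((hsph v₀ n).toFinset).erase (star n) |>.filter
              (fun u => ext g' u = true)).card := by
          congr 1
          apply Finset.filter_congr
          intro u hu
          exact iff_of_eq (congrArg (fun b => b = true) (hvag u hu))
        have hdecomp : ∀ (c : V → Bool),
            ((hsph v₀ n).toFinset.filter (fun u => c u = true)).card =
            (((hsph v₀ n).toFinset).erase (star n) |>.filter (fun u => c u = true)).card +
              (if c (star n) = true then 1 else 0) := by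
          intro c
          conv_lhs => rw [← Finset.insert_erase (hstarSv n hn)]
          rw [Finset.filter_insert]
          split_ifs with hc
          · rw [Finset.card_insert_of_notMem]
            intro hmem
            exact (Finset.mem_erase.mp (Finset.mem_of_mem_filter _ hmem)).1 rfl
          · omega
        have h1 := hPg n hn
        have h2 := hPg' n hn
        have e1 := hdecomp (ext g)
        have e2 := hdecomp (ext g')
        have hite : (if ext g (star n) = true then 1 else 0) =
            (if ext g' (star n) = true then 1 else 0) := by omega
        have hboo : ext g (star n) = ext g' (star n) := by
          by_cases b1 : ext g (star n) = true <;> by_cases b2 : ext g' (star n) = true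
          · rw [b1, b2]
          · simp [b1, b2] at hite
          · simp [b1, b2] at hite
          · rw [Bool.not_eq_true] at b1 b2
            rw [b1, b2]
        rw [hext g _ h, hext g' _ h] at hboo
        exact hboo
    funext a
    by_cases ha : a ∈ S
    · obtain ⟨n, hnL, heq⟩ := hmemS a ha
      calc g a = g ⟨star n, hstarT n hnL⟩ := congrArg g heq
        _ = g' ⟨star n, hstarT n hnL⟩ := main n hnL (hstarT n hnL)
        _ = g' a := (congrArg g' heq).symm
    · exact hagree a ha
  -- cardinality bound for Sat
  set ρ : (↥T → Bool) → (↥T → Bool) :=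
    fun g a => if a ∈ S then false else g a with hρdef
  set Tar : Finset (↥T → Bool) :=
    Finset.univ.filter (fun g => ∀ a ∈ S, g a = false) with hTardef
  have hmaps : ∀ g ∈ Sat, ρ g ∈ Tar := by
    intro g _
    refine Finset.mem_filter.mpr ⟨Finset.mem_univ _, fun a ha => ?_⟩
    show (if a ∈ S then false else g a) = false
    exact if_pos ha
  have hinj : Set.InjOn ρ ↑Sat := by
    intro g hg g' hg' heq
    refine huniq g (Finset.mem_coe.mp hg) g' (Finset.mem_coe.mp hg') ?_
    intro a ha
    have hfa := congrFun heq a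
    have h1 : ρ g a = g a := if_neg ha
    have h2 : ρ g' a = g' a := if_neg ha
    rw [h1, h2] at hfa
    exact hfa
  have hSat_le : Sat.card ≤ Tar.card := Finset.card_le_card_of_injOn ρ hmaps hinj
  have hTar : Tar.card = 2 ^ (T.card - m) := by
    have h1 : Tar.card = Fintype.card {g : ↥T → Bool // ∀ a ∈ S, g a = false} := by
      rw [Fintype.card_subtype]
    have e : {g : ↥T → Bool // ∀ a ∈ S, g a = false} ≃
        ({a : ↥T // a ∉ S} → Bool) := by
      refine ⟨fun gh a => gh.1 a.1, fun h => ⟨fun a => if ha : a ∈ S then false else h ⟨a, ha⟩,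
        fun a ha => dif_pos ha⟩, ?_, ?_⟩
      · intro gh
        refine Subtype.ext (funext fun a => ?_)
        by_cases ha : a ∈ S
        · simp [ha, gh.2 a ha]
        · simp [ha]
      · intro h
        funext a
        simp [a.2]
    have hc1 : Fintype.card (↥T) = T.card := Fintype.card_coe T
    have hc2 : Fintype.card {a : ↥T // a ∈ S} = m := by
      simpa [Fintype.card_coe] using hScard
    rw [h1, Fintype.card_congr e, Fintype.card_fun, Fintype.card_bool,
      Fintype.card_subtype_compl, hc1, hc2]
  have hSatcard : Sat.card ≤ 2 ^ (T.card - m) := hTar ▸ hSat_le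
  -- putting the measure bound together
  have hcast : (Sat.card : ENNReal) ≤ (2 : ENNReal) ^ (T.card - m) := by
    have h : ((Sat.card : ℕ) : ENNReal) ≤ ((2 ^ (T.card - m) : ℕ) : ENNReal) :=
      Nat.cast_le.mpr hSatcard
    push_cast at h
    exact h
  have harith : (2 : ENNReal) ^ (T.card - m) * (2 : ENNReal)⁻¹ ^ T.card =
      (2 : ENNReal)⁻¹ ^ m := by
    have hsplit : (2 : ENNReal)⁻¹ ^ T.card =
        (2 : ENNReal)⁻¹ ^ (T.card - m) * (2 : ENNReal)⁻¹ ^ m := by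
      rw [← pow_add, Nat.sub_add_cancel hmle]
    rw [hsplit, ← mul_assoc, ← mul_pow, ENNReal.mul_inv_cancel (by norm_num) (by norm_num),
      one_pow, one_mul]
  calc μ Ev ≤ μ (⋃ g ∈ Sat, {c : V → Bool | ∀ v ∈ T, c v = ext g v}) :=
        measure_mono (hEvP.trans hcov)
    _ ≤ ∑ g ∈ Sat, μ {c : V → Bool | ∀ v ∈ T, c v = ext g v} :=
        measure_biUnion_finset_le Sat _
    _ = ∑ g ∈ Sat, (2 : ENNReal)⁻¹ ^ T.card := Finset.sum_congr rfl fun g _ => hμ T (ext g)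
    _ = Sat.card * (2 : ENNReal)⁻¹ ^ T.card := by rw [Finset.sum_const, nsmul_eq_mul]
    _ ≤ (2 : ENNReal) ^ (T.card - m) * (2 : ENNReal)⁻¹ ^ T.card :=
        mul_le_mul_left hcast _
    _ = (2 : ENNReal)⁻¹ ^ m := harith

end TwoEndedRandomAux

open TwoEndedRandomAux in
/-- Let `G` be a connected, locally finite graph with at least two ends and infinite
motion. For a random `2`-colouring `c` of the vertices (i.i.d. uniform, encoded by the
cylinder condition on `μ`), the stabiliser of `c` in `Aut G` is almost surely compact;
equivalently (for closed subdegree finite permutation groups), almost surely some vertex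
has finite orbit under the group of colour-preserving automorphisms. -/
theorem two_ended_random_stabiliser_compact {V : Type*} (G : SimpleGraph V)
    (hconn : G.Connected) (hlf : ∀ v : V, Set.Finite (G.neighborSet v))
    (hends : ∃ e₁ e₂ : G.end, e₁ ≠ e₂)
    (hmotion : ∀ φ : G ≃g G, (∃ v, φ v ≠ v) → Set.Infinite {v : V | φ v ≠ v})
    (μ : Measure (V → Bool)) [IsProbabilityMeasure μ]
    (hμ : ∀ (F : Finset V) (f : V → Bool),
      μ {c : V → Bool | ∀ v ∈ F, c v = f v} = (2 : ENNReal)⁻¹ ^ F.card) :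
    μ {c : V → Bool |
        ¬ ∃ v : V, Set.Finite {w : V | ∃ φ : G ≃g G, (∀ u, c (φ u) = c u) ∧ φ v = w}} = 0 := by
  classical
  obtain ⟨e₁, e₂, hne⟩ := hends
  have hvals : e₁.val ≠ e₂.val := fun h => hne (Subtype.ext h)
  obtain ⟨K, hK⟩ : ∃ K, e₁.val K ≠ e₂.val K := by
    by_contra h
    push_neg at h
    exact hvals (funext h)
  obtain ⟨v₀⟩ := hconn.nonempty
  set r : ℕ := (Opposite.unop K).sup (fun k => G.dist v₀ k) with hrdef
  obtain ⟨K', hK'mem⟩ : ∃ K' : Finset V, ∀ u : V, u ∈ K' ↔ G.dist v₀ u ≤ r :=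
    ⟨(ball_fin hconn hlf v₀ r).toFinset, fun u => Set.Finite.mem_toFinset _⟩
  have hsub : Opposite.unop K ⊆ K' := by
    intro k hk
    exact (hK'mem k).mpr (Finset.le_sup (f := fun k => G.dist v₀ k) hk)
  -- two distinct infinite components outside K'
  have hhom₁ := e₁.prop (CategoryTheory.opHomOfLE hsub)
  have hhom₂ := e₂.prop (CategoryTheory.opHomOfLE hsub)
  have hC12 : e₁.val (Opposite.op K') ≠ e₂.val (Opposite.op K') := by
    intro h
    exact hK (by rw [← hhom₁, ← hhom₂, h])
  have hC₁inf : (e₁.val (Opposite.op K')).supp.Infinite := end_component_infinite e₁ _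
  have hC₂inf : (e₂.val (Opposite.op K')).supp.Infinite := end_component_infinite e₂ _
  -- the per-target events
  set F : V → Set (V → Bool) := fun x => {c : V → Bool |
    2 * r + 2 ≤ G.dist v₀ x ∧ ∃ φ : G ≃g G, (∀ u, c (φ u) = c u) ∧ φ v₀ = x} with hFdef
  have hF0 : ∀ x : V, μ (F x) = 0 := by
    intro x
    by_cases hx : 2 * r + 2 ≤ G.dist v₀ x
    · -- x is far: find the shielding component U
      have hxK' : x ∉ (K' : Set V) := by
        intro hmem
        have := (hK'mem x).mp hmem
        omega
      set Cx := G.componentComplMk hxK' with hCxdef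
      obtain ⟨C, hCinf, hCne⟩ : ∃ C : G.ComponentCompl (K' : Set V),
          C.supp.Infinite ∧ C ≠ Cx := by
        rcases eq_or_ne (e₁.val (Opposite.op K')) Cx with h | h
        · exact ⟨e₂.val (Opposite.op K'), hC₂inf, fun hh => hC12 (h.trans hh.symm)⟩
        · exact ⟨e₁.val (Opposite.op K'), hC₁inf, h⟩
      have key : ∀ u ∈ C.supp, G.dist v₀ u + 2 ≤ G.dist x u := by
        rintro u ⟨huK, hmk⟩
        obtain ⟨p, hp⟩ := hconn.exists_walk_length_eq_dist x u
        have hmkne : G.componentComplMk hxK' ≠ G.componentComplMk huK := by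
          rw [hmk]
          exact fun hh => hCne hh.symm
        obtain ⟨k, hkK, hks⟩ := walk_hits p hxK' huK hmkne
        have h1 : G.dist x k ≤ (p.takeUntil k hks).length := SimpleGraph.dist_le _
        have h2 : G.dist k u ≤ (p.dropUntil k hks).length := SimpleGraph.dist_le _
        have h3 : (p.takeUntil k hks).length + (p.dropUntil k hks).length = p.length := by
          have := congrArg SimpleGraph.Walk.length (p.take_spec hks)
          rwa [SimpleGraph.Walk.length_append] at this
        have hk1 : G.dist v₀ k ≤ r := (hK'mem k).mp hkK
        have t1 : G.dist v₀ x ≤ G.dist v₀ k + G.dist k x := hconn.dist_triangle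
        have t2 : G.dist v₀ u ≤ G.dist v₀ k + G.dist k u := hconn.dist_triangle
        have hcomm : G.dist k x = G.dist x k := SimpleGraph.dist_comm
        omega
      have hFsub : F x ⊆ {c : V → Bool | ∃ φ : G ≃g G, (∀ u, c (φ u) = c u) ∧ φ v₀ = x} := by
        rintro c ⟨_, hφ⟩
        exact hφ
      have hzero := measure_image_event_zero hconn hlf μ hμ v₀ x C.supp hCinf key
      refine le_antisymm ?_ zero_le
      calc μ (F x) ≤ μ {c : V → Bool | ∃ φ : G ≃g G, (∀ u, c (φ u) = c u) ∧ φ v₀ = x} :=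
            measure_mono hFsub
        _ = 0 := hzero
    · -- x is near: the event is empty
      have hFsub : F x ⊆ (∅ : Set (V → Bool)) := by
        rintro c ⟨hc, _⟩
        exact absurd hc hx
      have : μ (F x) ≤ 0 := by
        calc μ (F x) ≤ μ (∅ : Set (V → Bool)) := measure_mono hFsub
          _ = 0 := measure_empty
      exact le_antisymm this zero_le
  -- cover the bad event by the per-target events
  have hcover : {c : V → Bool |
      ¬ ∃ v : V, Set.Finite {w : V | ∃ φ : G ≃g G, (∀ u, c (φ u) = c u) ∧ φ v = w}} ⊆
      ⋃ x : V, F x := by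
    intro c hc
    have horb : {w : V | ∃ φ : G ≃g G, (∀ u, c (φ u) = c u) ∧ φ v₀ = w}.Infinite :=
      fun hfin => hc ⟨v₀, hfin⟩
    obtain ⟨w, hworb, hwball⟩ :=
      (horb.diff (ball_fin hconn hlf v₀ (2 * r + 1))).nonempty
    have hwfar : 2 * r + 2 ≤ G.dist v₀ w := by
      simp only [Set.mem_setOf_eq] at hwball
      omega
    exact Set.mem_iUnion.mpr ⟨w, hwfar, hworb⟩
  have : Countable V := countable_of_connected_locallyFinite hconn hlf
  have hfinal : μ {c : V → Bool |
      ¬ ∃ v : V, Set.Finite {w : V | ∃ φ : G ≃g G, (∀ u, c (φ u) = c u) ∧ φ v = w}} ≤ 0 := by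
    calc μ _ ≤ μ (⋃ x : V, F x) := measure_mono hcover
      _ ≤ ∑' x : V, μ (F x) := measure_iUnion_le F
      _ = 0 := by simp [hF0]
  exact le_antisymm hfinal zero_le
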